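/- Dynamic energization conserves the dynamic energy: for a reference trajectory x̃ with relative velocity ẋ_rel = ẋ - ẋ̃, set α = -(ẋ_relᵀ M ẋ_rel)⁻¹ ẋ_relᵀ (M(h + ẍ̃) - f). Then the system ẍ = -h - α ẋ_rel satisfies ẋ_relᵀ (M(ẍ - ẍ̃) + f) = 0, i.e., the rate of change of the dynamic Hamiltonian vanishes. -/

import Mathlib

open Matrix

/-- Dynamic energization conserves the dynamic energy:
with `ẋ_rel = ẋ - ẋ̃`, `α = -(ẋ_relᵀMẋ_rel)⁻¹ ẋ_relᵀ(M(h+ẍ̃) - f)` and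
`ẍ = -h - α • ẋ_rel`, the dynamic energy rate `ẋ_relᵀ(M(ẍ - ẍ̃) + f)` is zero. -/
theorem dynamic_energization_conserves_energy {n : ℕ}
    (M : Matrix (Fin n) (Fin n) ℝ) (hM : M.IsSymm)
    (f h xdot xtdot xtddot : Fin n → ℝ)
    (hne : (xdot - xtdot) ⬝ᵥ (M *ᵥ (xdot - xtdot)) ≠ 0) :
    let xrel : Fin n → ℝ := xdot - xtdot
    let α : ℝ := -(xrel ⬝ᵥ (M *ᵥ xrel))⁻¹ * (xrel ⬝ᵥ (M *ᵥ (h + xtddot) - f))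
    let xddot : Fin n → ℝ := -h - α • xrel
    xrel ⬝ᵥ (M *ᵥ (xddot - xtddot) + f) = 0 := by
  intro xrel α xddot
  have hx : xddot - xtddot = -(h + xtddot) - α • xrel := by
    simp only [xddot]; funext i; simp; ring
  have expand : xrel ⬝ᵥ (M *ᵥ (xddot - xtddot) + f)
      = -(xrel ⬝ᵥ (M *ᵥ (h + xtddot) - f)) - α * (xrel ⬝ᵥ (M *ᵥ xrel)) := by
    rw [hx]
    simp [sub_eq_add_neg, Matrix.mulVec_add, Matrix.mulVec_smul, dotProduct_add,
      dotProduct_smul, Matrix.mulVec_neg, dotProduct_neg, smul_eq_mul]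
    ring
  rw [expand]
  simp only [α]
  field_simp
  rw [div_self (show xrel ⬝ᵥ (M *ᵥ xrel) ≠ 0 from hne)]; ring
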